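/- Let K be a field and D a division K-algebra such that the algebra D ⊗_K D^o is a Noetherian ring. Then every division K-subalgebra Γ of D is a finitely generated division K-algebra: there exists a finite subset S of Γ such that the only division K-subalgebra of D containing S and contained in Γ is Γ itself. -/

import Mathlib

open TensorProduct

section Aux

variable {K D : Type*} [Field K] [DivisionRing D] [Algebra K D]

private lemma finite_subset_image' {α β : Type*} {f : α → β} {s : Set α} {u : Set β}
    (hu : u.Finite) (h : u ⊆ f '' s) : ∃ t : Set α, t ⊆ s ∧ t.Finite ∧ u ⊆ f '' t := by
  have key : ∀ y : u, ∃ x, x ∈ s ∧ f x = (y : β) := fun y => h y.2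
  choose φ hφs hφf using key
  have : Finite ↥u := hu.to_subtype
  refine ⟨Set.range φ, ?_, Set.finite_range φ, ?_⟩
  · rintro x ⟨y, rfl⟩; exact hφs y
  · intro y hy
    exact ⟨φ ⟨y, hy⟩, ⟨⟨y, hy⟩, rfl⟩, hφf ⟨y, hy⟩⟩

/-- A `Γ`-linear projection of `D` onto `Γ` (phrased instance-freely). -/
private lemma exists_proj (Γ : Subalgebra K D) (hΓ : ∀ x ∈ Γ, x ≠ 0 → x⁻¹ ∈ Γ) :
    ∃ π : D →ₗ[K] D, π 1 = 1 ∧ (∀ d, π d ∈ Γ) ∧ ∀ γ ∈ Γ, ∀ d, π (γ * d) = γ * π d := by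
  let F : Subfield D := ⟨Γ.toSubring, fun x hx => by
    by_cases h0 : x = 0
    · simpa [h0] using Γ.zero_mem
    · exact hΓ x hx h0⟩
  have hFΓ : ∀ {y : D}, y ∈ F ↔ y ∈ Γ := Iff.rfl
  let M : Submodule ↥F D := Submodule.span ↥F {(1 : D)}
  obtain ⟨q, hq⟩ := Submodule.exists_isCompl M
  let π₀ : D →ₗ[↥F] D := M.subtype ∘ₗ M.linearProjOfIsCompl q hq
  have h1 : π₀ 1 = 1 := by
    have := Submodule.linearProjOfIsCompl_apply_left hq ⟨1, Submodule.mem_span_singleton_self 1⟩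
    exact congrArg Subtype.val this
  have hmem : ∀ d, π₀ d ∈ Γ := by
    intro d
    have hM : π₀ d ∈ M := (M.linearProjOfIsCompl q hq d).2
    obtain ⟨a, ha⟩ := Submodule.mem_span_singleton.1 hM
    have ha' : (a : D) * 1 = π₀ d := ha
    rw [mul_one] at ha'
    rw [← ha']; exact hFΓ.1 a.2
  have hlin : ∀ γ ∈ Γ, ∀ d, π₀ (γ * d) = γ * π₀ d := by
    intro γ hγ d
    exact π₀.map_smul (⟨γ, hFΓ.2 hγ⟩ : ↥F) d
  refine ⟨{ toFun := π₀, map_add' := π₀.map_add, map_smul' := ?_ }, h1, hmem, hlin⟩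
  intro k x
  have h1' : k • x = algebraMap K D k * x := Algebra.smul_def k x
  have h2' : π₀ (algebraMap K D k * x) = algebraMap K D k * π₀ x :=
    hlin _ (Γ.algebraMap_mem k) x
  simp only [RingHom.id_apply]
  rw [h1', h2', ← Algebra.smul_def]

/-- Key lemma: membership of `x ⊗ 1 - 1 ⊗ op x` in the left ideal generated by the
corresponding elements for a division subalgebra `Γ` forces `x ∈ Γ`. -/
private lemma key_mem (Γ : Subalgebra K D) (hΓ : ∀ x ∈ Γ, x ≠ 0 → x⁻¹ ∈ Γ) (x : D)
    (hx : x ⊗ₜ[K] (1 : Dᵐᵒᵖ) - (1 : D) ⊗ₜ[K] MulOpposite.op x ∈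
      Submodule.span (D ⊗[K] Dᵐᵒᵖ)
        ((fun y : D => y ⊗ₜ[K] (1 : Dᵐᵒᵖ) - (1 : D) ⊗ₜ[K] MulOpposite.op y) '' (Γ : Set D))) :
    x ∈ Γ := by
  obtain ⟨π, hπ1, hπmem, hπlin⟩ := exists_proj Γ hΓ
  let Φ : D ⊗[K] Dᵐᵒᵖ →ₗ[K] D :=
    TensorProduct.lift ((LinearMap.mul K D).compl₂
      (π ∘ₗ (MulOpposite.opLinearEquiv K (M := D)).symm.toLinearMap))
  have hΦ : ∀ (a : D) (b : Dᵐᵒᵖ), Φ (a ⊗ₜ[K] b) = a * π b.unop := fun a b => rfl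
  -- the set of elements killed by Φ after any left multiplication is a left submodule
  let p : Submodule (D ⊗[K] Dᵐᵒᵖ) (D ⊗[K] Dᵐᵒᵖ) :=
    { carrier := {t | ∀ r : D ⊗[K] Dᵐᵒᵖ, Φ (r * t) = 0}
      add_mem' := fun {s t} hs ht r => by rw [mul_add, map_add, hs r, ht r, add_zero]
      zero_mem' := fun r => by rw [mul_zero, map_zero]
      smul_mem' := fun c {t} ht r => by
        rw [smul_eq_mul, ← mul_assoc]; exact ht (r * c) }
  have hsub : Submodule.span (D ⊗[K] Dᵐᵒᵖ)
      ((fun y : D => y ⊗ₜ[K] (1 : Dᵐᵒᵖ) - (1 : D) ⊗ₜ[K] MulOpposite.op y) '' (Γ : Set D)) ≤ p := by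
    rw [Submodule.span_le]
    rintro _ ⟨y, hy, rfl⟩
    intro r
    induction r using TensorProduct.induction_on with
    | zero => rw [zero_mul, map_zero]
    | tmul a b =>
        have h1 : (b * MulOpposite.op y).unop = y * b.unop := rfl
        have h2 : ((b : Dᵐᵒᵖ) * 1).unop = b.unop := by rw [mul_one]
        rw [mul_sub, Algebra.TensorProduct.tmul_mul_tmul, Algebra.TensorProduct.tmul_mul_tmul,
          map_sub, hΦ, hΦ, h1, h2, mul_one, hπlin y hy b.unop, mul_assoc a y, sub_self]
    | add r₁ r₂ h₁ h₂ => rw [add_mul, map_add, h₁, h₂, add_zero]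
  have hxp := hsub hx (1 : D ⊗[K] Dᵐᵒᵖ)
  rw [one_mul, map_sub, hΦ, hΦ] at hxp
  have hux : (MulOpposite.op x).unop = x := rfl
  have hu1 : (1 : Dᵐᵒᵖ).unop = 1 := rfl
  rw [hux, hu1, hπ1, mul_one, one_mul, sub_eq_zero] at hxp
  rw [hxp]; exact hπmem x

end Aux

/-- If `D` is a division `K`-algebra with `D ⊗[K] Dᵐᵒᵖ` a Noetherian ring,
then every division `K`-subalgebra `Γ` of `D` is a finitely generated division algebra:
some finite subset `S` of `Γ` is contained in no division `K`-subalgebra of `D` that is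
properly contained in `Γ`. -/
theorem stmt1 (K D : Type*) [Field K] [DivisionRing D] [Algebra K D]
    (hNoeth : IsNoetherianRing (D ⊗[K] Dᵐᵒᵖ))
    (Γ : Subalgebra K D) (hΓ : ∀ x ∈ Γ, x ≠ 0 → x⁻¹ ∈ Γ) :
    ∃ S : Finset D, (S : Set D) ⊆ (Γ : Set D) ∧
      ∀ Γ' : Subalgebra K D, (∀ x ∈ Γ', x ≠ 0 → x⁻¹ ∈ Γ') →
        (S : Set D) ⊆ (Γ' : Set D) → Γ' ≤ Γ → Γ' = Γ := by
  classical
  set g : D → D ⊗[K] Dᵐᵒᵖ :=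
    fun y : D => y ⊗ₜ[K] (1 : Dᵐᵒᵖ) - (1 : D) ⊗ₜ[K] MulOpposite.op y with hg
  set J : Submodule (D ⊗[K] Dᵐᵒᵖ) (D ⊗[K] Dᵐᵒᵖ) :=
    Submodule.span (D ⊗[K] Dᵐᵒᵖ) (g '' (Γ : Set D)) with hJ
  -- `J` is finitely generated
  obtain ⟨T, hT⟩ := IsNoetherian.noetherian (R := D ⊗[K] Dᵐᵒᵖ) J
  -- each generator lies in the span of finitely many elements of `g '' Γ`
  have hTsub : ∀ t ∈ T, ∃ u : Finset (D ⊗[K] Dᵐᵒᵖ),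
      ↑u ⊆ g '' (Γ : Set D) ∧ t ∈ Submodule.span (D ⊗[K] Dᵐᵒᵖ) (u : Set (D ⊗[K] Dᵐᵒᵖ)) := by
    intro t ht
    exact Submodule.mem_span_finite_of_mem_span (by rw [← hJ, ← hT]; exact Submodule.subset_span ht)
  choose u hu₁ hu₂ using hTsub
  -- collect a finite subset of `g '' Γ` spanning `J`
  let U : Finset (D ⊗[K] Dᵐᵒᵖ) := T.attach.biUnion fun t => u t.1 t.2
  have hUfin : (U : Set (D ⊗[K] Dᵐᵒᵖ)).Finite := U.finite_toSet
  have hUsub : (U : Set (D ⊗[K] Dᵐᵒᵖ)) ⊆ g '' (Γ : Set D) := by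
    intro z hz
    obtain ⟨t, -, hzt⟩ := Finset.mem_biUnion.1 hz
    exact hu₁ t.1 t.2 hzt
  have hJU : J ≤ Submodule.span (D ⊗[K] Dᵐᵒᵖ) (U : Set (D ⊗[K] Dᵐᵒᵖ)) := by
    rw [← hT, Submodule.span_le]
    intro t ht
    refine Submodule.span_mono ?_ (hu₂ t ht)
    intro z hz
    exact Finset.mem_coe.2 (Finset.mem_biUnion.2 ⟨⟨t, ht⟩, Finset.mem_attach _ _, hz⟩)
  -- pull `U` back to a finite subset of `Γ`
  obtain ⟨s, hsΓ, hsfin, hUs⟩ := finite_subset_image' hUfin hUsub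
  refine ⟨hsfin.toFinset, by simpa using hsΓ, ?_⟩
  intro Γ' hΓ' hSΓ' hle
  refine le_antisymm hle ?_
  intro x hxΓ
  have hxJ : g x ∈ J := Submodule.subset_span ⟨x, hxΓ, rfl⟩
  have hsΓ' : s ⊆ (Γ' : Set D) := by
    intro y hy
    exact hSΓ' (by simpa using hy)
  have hxspan : g x ∈ Submodule.span (D ⊗[K] Dᵐᵒᵖ) (g '' (Γ' : Set D)) := by
    refine Submodule.span_mono ?_ (hJU hxJ)
    exact fun z hz => (Set.image_mono (f := g) hsΓ') (hUs hz)
  exact key_mem Γ' hΓ' x hxspan
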